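/- Averaging trick estimate: for any x with ‖x‖₁ ≥ 2 and m = ⌊‖x‖₁^{1/4}⌋+1, the averaged quantity F = -(1/#B) ∑_{z∈B} log G(z, x+z), where B is the ℓ¹ ball of radius m around 0, satisfies |ρ(x) - F| ≤ C_{a,b} m, provided a ≤ V ≤ b. -/

import Mathlib

open Finset


lemma aux_abs_sum_step {d : ℕ} (w w' : Fin d → ℤ) (i : Fin d) (s : ℤ)
    (hs : |w i + s - w' i| = |w i - w' i| - 1) :
    ∑ j, |(w + Pi.single i s : Fin d → ℤ) j - w' j| = (∑ j, |w j - w' j|) - 1 := by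
  have h : ∀ j, |(w + Pi.single i s : Fin d → ℤ) j - w' j|
      = |w j - w' j| - (if j = i then 1 else 0) := by
    intro j
    by_cases hj : j = i
    · subst hj; simpa [Pi.single_eq_same] using hs
    · simp [Pi.single_eq_of_ne hj, hj]
  simp_rw [h]
  rw [Finset.sum_sub_distrib]
  simp

lemma aux_path {d : ℕ} (G : (Fin d → ℤ) → (Fin d → ℤ) → ℝ)
    (hpos : ∀ z w, 0 < G z w)
    (c : ℝ) (hc0 : 0 < c) (hc1 : c ≤ 1)
    (hstep : ∀ u w (i : Fin d) (s : ℤ), s = 1 ∨ s = -1 →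
       c * G u (w + Pi.single i s) ≤ G u w) :
    ∀ n : ℕ, ∀ u w w' : Fin d → ℤ, (∑ i, |w i - w' i|) ≤ (n : ℤ) →
      c ^ n * G u w' ≤ G u w := by
  intro n
  induction n with
  | zero =>
    intro u w w' h
    have hz : ∑ i, |w i - w' i| = 0 := le_antisymm (by exact_mod_cast h)
      (Finset.sum_nonneg fun i _ => abs_nonneg _)
    have hww : w = w' := by
      funext j
      have := (Finset.sum_eq_zero_iff_of_nonneg (fun i _ => abs_nonneg (w i - w' i))).mp hz
        j (Finset.mem_univ j)
      have := abs_eq_zero.mp this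
      linarith [this]
    rw [hww, pow_zero, one_mul]
  | succ n ih =>
    intro u w w' h
    by_cases hww : w = w'
    · subst hww
      have h1 : c ^ (n+1) ≤ 1 := pow_le_one₀ hc0.le hc1
      nlinarith [hpos u w]
    · have hex : ∃ j, w j ≠ w' j := by
        by_contra hc'
        push_neg at hc'
        exact hww (funext hc')
      obtain ⟨j, hj⟩ := hex
      have key : ∃ s : ℤ, (s = 1 ∨ s = -1) ∧ |w j + s - w' j| = |w j - w' j| - 1 := by
        rcases hj.lt_or_gt with h' | h'
        · refine ⟨1, Or.inl rfl, ?_⟩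
          simp only [Int.abs_eq_natAbs]
          omega
        · refine ⟨-1, Or.inr rfl, ?_⟩
          simp only [Int.abs_eq_natAbs]
          omega
      obtain ⟨s, hs1, hs⟩ := key
      set w₂ : Fin d → ℤ := w + Pi.single j s with hw₂
      have hsum := aux_abs_sum_step w w' j s hs
      have hd2 : ∑ k, |w₂ k - w' k| ≤ (n : ℤ) := by
        rw [hw₂, hsum]
        push_cast at h ⊢
        omega
      have hih : c ^ n * G u w' ≤ G u w₂ := ih u w₂ w' hd2
      have hst : c * G u w₂ ≤ G u w := hstep u w j s hs1
      calc c ^ (n+1) * G u w' = c * (c ^ n * G u w') := by ring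
        _ ≤ c * G u w₂ := mul_le_mul_of_nonneg_left hih hc0.le
        _ ≤ G u w := hst


lemma aux_step {d : ℕ} (hd : 0 < d) (b : ℝ) (hb : 0 ≤ b)
    (V : (Fin d → ℤ) → ℝ) (G : (Fin d → ℤ) → (Fin d → ℤ) → ℝ)
    (hV0 : ∀ z, 0 ≤ V z) (hVb : ∀ z, V z ≤ b)
    (heq : ∀ z w, (1 + V w) * G z w
            - ((2 * d : ℝ))⁻¹ *
              ∑ i : Fin d, (G z (w + Pi.single i 1) + G z (w - Pi.single i 1))
          = if w = z then 1 else 0)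
    (hpos : ∀ z w, 0 < G z w) :
    ∀ u w (i : Fin d) (s : ℤ), s = 1 ∨ s = -1 →
      ((2 * d : ℝ) * (1 + b))⁻¹ * G u (w + Pi.single i s) ≤ G u w := by
  intro u w i s hs
  have hdr : (0:ℝ) < (d:ℝ) := by exact_mod_cast hd
  have h := heq u w
  have hneg : (w + Pi.single i (-1 : ℤ)) = w - Pi.single i 1 := by
    funext k
    by_cases hk : k = i
    · subst hk; simp [sub_eq_add_neg]
    · simp [Pi.single_eq_of_ne hk]
  have hterm : G u (w + Pi.single i s)
      ≤ ∑ i' : Fin d, (G u (w + Pi.single i' 1) + G u (w - Pi.single i' 1)) := by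
    have hle : G u (w + Pi.single i s) ≤ G u (w + Pi.single i 1) + G u (w - Pi.single i 1) := by
      rcases hs with rfl | rfl
      · nlinarith [hpos u (w - Pi.single i 1)]
      · rw [hneg]
        nlinarith [hpos u (w + Pi.single i 1)]
    refine hle.trans (Finset.single_le_sum (f := fun i' =>
      G u (w + Pi.single i' 1) + G u (w - Pi.single i' 1)) (fun i' _ => ?_) (Finset.mem_univ i))
    exact (add_pos (hpos _ _) (hpos _ _)).le
  have hδ : (0:ℝ) ≤ (if w = u then (1:ℝ) else 0) := by split_ifs <;> norm_num
  have hinv : (0:ℝ) < ((2 * d : ℝ))⁻¹ := by positivity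
  have h1 : ((2 * d : ℝ))⁻¹ * G u (w + Pi.single i s) ≤ (1 + V w) * G u w := by
    nlinarith [mul_le_mul_of_nonneg_left hterm hinv.le]
  have hb1 : (0:ℝ) < 1 + V w := by linarith [hV0 w]
  have hbb : 1 + V w ≤ 1 + b := by linarith [hVb w]
  have h2 : ((2 * d : ℝ))⁻¹ * G u (w + Pi.single i s) ≤ (1 + b) * G u w :=
    h1.trans (by nlinarith [hpos u w])
  have h3 := mul_le_mul_of_nonneg_left h2 (inv_nonneg.mpr (by linarith : (0:ℝ) ≤ 1 + b))
  calc ((2 * d : ℝ) * (1 + b))⁻¹ * G u (w + Pi.single i s)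
      = (1+b)⁻¹ * (((2 * d : ℝ))⁻¹ * G u (w + Pi.single i s)) := by
        rw [mul_inv]; ring
    _ ≤ (1+b)⁻¹ * ((1 + b) * G u w) := h3
    _ = G u w := by field_simp

lemma aux_diag_lo {d : ℕ} (hd : 0 < d) (b : ℝ) (hb : 0 ≤ b)
    (V : (Fin d → ℤ) → ℝ) (G : (Fin d → ℤ) → (Fin d → ℤ) → ℝ)
    (hV0 : ∀ z, 0 ≤ V z) (hVb : ∀ z, V z ≤ b)
    (heq : ∀ z w, (1 + V w) * G z w
            - ((2 * d : ℝ))⁻¹ *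
              ∑ i : Fin d, (G z (w + Pi.single i 1) + G z (w - Pi.single i 1))
          = if w = z then 1 else 0)
    (hpos : ∀ z w, 0 < G z w) :
    ∀ y, 1 / (1 + b) ≤ G y y := by
  intro y
  have hdr : (0:ℝ) < (d:ℝ) := by exact_mod_cast hd
  have h := heq y y
  rw [if_pos rfl] at h
  have hsum : (0:ℝ) ≤ ∑ i : Fin d, (G y (y + Pi.single i 1) + G y (y - Pi.single i 1)) :=
    Finset.sum_nonneg fun i _ => (add_pos (hpos _ _) (hpos _ _)).le
  have hinv : (0:ℝ) ≤ ((2 * d : ℝ))⁻¹ := by positivity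
  have h1 : 1 ≤ (1 + b) * G y y := by nlinarith [hVb y, hpos y y, mul_nonneg hinv hsum]
  rw [div_le_iff₀ (by linarith : (0:ℝ) < 1 + b)]
  linarith


lemma aux_diag_up {d : ℕ} (hd : 0 < d) (a b : ℝ) (ha : 0 < a) (hab : a ≤ b)
    (V : (Fin d → ℤ) → ℝ) (G : (Fin d → ℤ) → (Fin d → ℤ) → ℝ)
    (hVa : ∀ z, a ≤ V z) (hVb : ∀ z, V z ≤ b)
    (heq : ∀ z w, (1 + V w) * G z w
            - ((2 * d : ℝ))⁻¹ *
              ∑ i : Fin d, (G z (w + Pi.single i 1) + G z (w - Pi.single i 1))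
          = if w = z then 1 else 0)
    (hsq : ∀ z, Summable fun w => (G z w) ^ 2)
    (hpos : ∀ z w, 0 < G z w) :
    ∀ z, G z z ≤ 1 / a := by
  intro z
  have hdr : (0:ℝ) < (d:ℝ) := by exact_mod_cast hd
  have hfS : Summable (fun w => G z w ^ 2) := hsq z
  -- shift facts
  have hshiftS : ∀ e : Fin d → ℤ, Summable (fun w => G z (w + e) ^ 2) := by
    intro e
    have := (Equiv.summable_iff (Equiv.addRight e) (f := fun w => G z w ^ 2)).mpr hfS
    simpa [Function.comp_def] using this
  have hshiftT : ∀ e : Fin d → ℤ, ∑' w, G z (w + e) ^ 2 = ∑' w, G z w ^ 2 := by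
    intro e
    have := Equiv.tsum_eq (Equiv.addRight e) (fun w => G z w ^ 2)
    simpa using this
  set S : ℝ := ∑' w, G z w ^ 2 with hS
  have hcrossS : ∀ e : Fin d → ℤ, Summable (fun w => G z w * G z (w + e)) := by
    intro e
    refine Summable.of_nonneg_of_le (fun w => (mul_pos (hpos z w) (hpos z _)).le)
      (fun w => ?_) ((hfS.add (hshiftS e)).div_const 2)
    nlinarith [sq_nonneg (G z w - G z (w + e))]
  have hcrossT : ∀ e : Fin d → ℤ, ∑' w, G z w * G z (w + e) ≤ S := by
    intro e
    calc ∑' w, G z w * G z (w + e)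
        ≤ ∑' w, (G z w ^ 2 + G z (w + e) ^ 2) / 2 :=
          Summable.tsum_le_tsum (fun w => by nlinarith [sq_nonneg (G z w - G z (w + e))])
            (hcrossS e) ((hfS.add (hshiftS e)).div_const 2)
      _ = (S + S) / 2 := by
          rw [tsum_div_const, Summable.tsum_add hfS (hshiftS e), hshiftT e]
      _ = S := by ring
  -- pointwise identity
  have key : ∀ w, (if w = z then G z w else 0)
      = (1 + V w) * G z w ^ 2
        - ((2 * d : ℝ))⁻¹ * ∑ i : Fin d,
            (G z w * G z (w + Pi.single i 1) + G z w * G z (w + -(Pi.single i 1))) := by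
    intro w
    have h := heq z w
    have hms : ∑ i : Fin d, (G z w * G z (w + Pi.single i 1) + G z w * G z (w + -(Pi.single i 1)))
        = G z w * ∑ i : Fin d, (G z (w + Pi.single i 1) + G z (w - Pi.single i 1)) := by
      rw [Finset.mul_sum]
      refine Finset.sum_congr rfl fun i _ => ?_
      rw [sub_eq_add_neg]
      ring
    rw [hms]
    by_cases hw : w = z
    · rw [if_pos hw]; rw [if_pos hw] at h
      linear_combination (-(G z w)) * h
    · rw [if_neg hw]; rw [if_neg hw] at h
      linear_combination (-(G z w)) * h
  have hA : Summable (fun w => (1 + V w) * G z w ^ 2) := by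
    refine Summable.of_nonneg_of_le (fun w => by nlinarith [hpos z w, hVa w, sq_nonneg (G z w)])
      (fun w => ?_) (hfS.mul_left (1 + b))
    nlinarith [sq_nonneg (G z w), hVb w]
  have hBsum : Summable (fun w => ∑ i : Fin d,
      (G z w * G z (w + Pi.single i 1) + G z w * G z (w + -(Pi.single i 1)))) :=
    summable_sum fun i _ => (hcrossS _).add (hcrossS _)
  have heqT : G z z = (∑' w, (1 + V w) * G z w ^ 2)
      - ((2 * d : ℝ))⁻¹ * ∑' w, ∑ i : Fin d,
          (G z w * G z (w + Pi.single i 1) + G z w * G z (w + -(Pi.single i 1))) := by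
    have h0 : G z z = ∑' w, (if w = z then G z w else 0) := by
      rw [tsum_eq_single z]
      · rw [if_pos rfl]
      · intro w hw; rw [if_neg hw]
    rw [h0, tsum_congr key, Summable.tsum_sub hA (hBsum.mul_left _), tsum_mul_left]
  have hT : ∑' w, ∑ i : Fin d,
      (G z w * G z (w + Pi.single i 1) + G z w * G z (w + -(Pi.single i 1)))
      ≤ (d:ℝ) * (2 * S) := by
    rw [Summable.tsum_finsetSum fun i _ => (hcrossS _).add (hcrossS _)]
    calc ∑ i : Fin d, ∑' w, (G z w * G z (w + Pi.single i 1) + G z w * G z (w + -(Pi.single i 1)))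
        ≤ ∑ _i : Fin d, (S + S) := by
          refine Finset.sum_le_sum fun i _ => ?_
          rw [Summable.tsum_add (hcrossS _) (hcrossS _)]
          exact add_le_add (hcrossT _) (hcrossT _)
      _ = (d:ℝ) * (2 * S) := by
          rw [Finset.sum_const]
          simp
          ring
  have hAge : (1 + a) * S ≤ ∑' w, (1 + V w) * G z w ^ 2 := by
    rw [hS, ← tsum_mul_left]
    exact Summable.tsum_le_tsum (fun w => by nlinarith [sq_nonneg (G z w), hVa w]) (hfS.mul_left (1 + a)) hA
  have hSz : G z z ^ 2 ≤ S := Summable.le_tsum hfS z fun w _ => sq_nonneg _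
  have hfinal : a * S ≤ G z z := by
    rw [heqT]
    have hinv : (0:ℝ) ≤ ((2 * d : ℝ))⁻¹ := by positivity
    have h1 := mul_le_mul_of_nonneg_left hT hinv
    have h2 : ((2 * d : ℝ))⁻¹ * ((d:ℝ) * (2 * S)) = S := by
      field_simp
    linarith [hAge]
  have hGz := hpos z z
  rw [le_div_iff₀ ha]
  nlinarith [mul_le_mul_of_nonneg_left hSz ha.le, hfinal, hGz]

/-- Averaging trick estimate on `ℤ^d`: if `a ≤ V ≤ b` with `a > 0`,
then for any `x` with `‖x‖₁ ≥ 2`, with `m = ⌊‖x‖₁^{1/4}⌋ + 1` and `B` the ℓ¹ ball of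
radius `m` about the origin, the averaged quantity
`F = -(1/#B) ∑_{z∈B} log G(z, x+z)` satisfies `|ρ(x) - F| ≤ C_{a,b} m`. -/
theorem stmt15 (d : ℕ) (hd : 0 < d) (a b : ℝ) (ha : 0 < a) (hab : a ≤ b) :
    ∃ C : ℝ, 0 < C ∧
      ∀ (V : (Fin d → ℤ) → ℝ) (G : (Fin d → ℤ) → (Fin d → ℤ) → ℝ),
        (∀ z, a ≤ V z) → (∀ z, V z ≤ b) →
        (∀ z w, (1 + V w) * G z w
            - ((2 * d : ℝ))⁻¹ *
              ∑ i : Fin d, (G z (w + Pi.single i 1) + G z (w - Pi.single i 1))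
          = if w = z then 1 else 0) →
        (∀ z, Summable fun w => (G z w) ^ 2) →
        (∀ z w, 0 < G z w) → (∀ z w, G z w = G w z) →
      ∀ x : Fin d → ℤ, 2 ≤ ∑ i, |x i| →
      ∀ m : ℕ, m = ⌊(((∑ i, |x i| : ℤ) : ℝ)) ^ ((1 : ℝ) / 4)⌋₊ + 1 →
      ∀ B : Finset (Fin d → ℤ), (∀ z, z ∈ B ↔ (∑ i, |z i|) ≤ (m : ℤ)) →
        |Real.log (Real.sqrt (G 0 0 * G x x) / G 0 x)
            - (-(1 / (B.card : ℝ)) * ∑ z ∈ B, Real.log (G z (x + z)))|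
          ≤ C * m := by
  have hb0 : (0:ℝ) < b := lt_of_lt_of_le ha hab
  have hd1 : (1:ℝ) ≤ (d:ℝ) := by exact_mod_cast hd
  have hcc : (1:ℝ) < (2 * d : ℝ) * (1 + b) := by nlinarith
  set L : ℝ := Real.log ((2 * d : ℝ) * (1 + b)) with hL
  have hL0 : 0 < L := Real.log_pos hcc
  set K : ℝ := Real.log (1 + b) + |Real.log a| with hK
  have hK0 : 0 ≤ K := add_nonneg (Real.log_nonneg (by linarith)) (abs_nonneg _)
  refine ⟨K + 2 * L, by linarith, ?_⟩
  intro V G hVa hVb heq hsq hpos hsymm x hx m hm B hB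
  have hV0 : ∀ z, 0 ≤ V z := fun z => le_trans ha.le (hVa z)
  set c : ℝ := ((2 * d : ℝ) * (1 + b))⁻¹ with hc
  have hc0 : 0 < c := by rw [hc]; exact inv_pos.mpr (by linarith)
  have hc1 : c ≤ 1 := by rw [hc]; exact inv_le_one_of_one_le₀ hcc.le
  have hlogc : Real.log c = -L := by rw [hc, Real.log_inv, hL]
  have hstep : ∀ u w (i : Fin d) (s : ℤ), s = 1 ∨ s = -1 →
      c * G u (w + Pi.single i s) ≤ G u w := by
    rw [hc]
    exact aux_step hd b hb0.le V G hV0 hVb heq hpos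
  have hpath : ∀ n : ℕ, ∀ u w w' : Fin d → ℤ, (∑ i, |w i - w' i|) ≤ (n : ℤ) →
      c ^ n * G u w' ≤ G u w := aux_path G hpos c hc0 hc1 hstep
  have hup : ∀ y, G y y ≤ 1 / a := aux_diag_up hd a b ha hab V G hVa hVb heq hsq hpos
  have hlo : ∀ y, 1 / (1 + b) ≤ G y y := aux_diag_lo hd b hb0.le V G hV0 hVb heq hpos
  have hm1 : 1 ≤ m := by omega
  have hmm : (1:ℝ) ≤ (m:ℝ) := by exact_mod_cast hm1
  -- diagonal log bound
  have hdiag : ∀ y, |Real.log (G y y)| ≤ K := by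
    intro y
    rw [abs_le]
    have hlo' := hlo y
    have hup' := hup y
    have h1 : Real.log (1 / (1 + b)) ≤ Real.log (G y y) :=
      Real.log_le_log (by positivity) hlo'
    have h2 : Real.log (G y y) ≤ Real.log (1 / a) :=
      Real.log_le_log (hpos y y) hup'
    rw [one_div, Real.log_inv] at h1 h2
    constructor
    · rw [hK]; have := abs_nonneg (Real.log a); linarith
    · rw [hK]
      have h3 : Real.log (1 + b) ≥ 0 := Real.log_nonneg (by linarith)
      have h4 : -Real.log a ≤ |Real.log a| := neg_le_abs _
      linarith
  -- off-diagonal comparison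
  have hoff : ∀ z ∈ B, |Real.log (G z (x + z)) - Real.log (G 0 x)| ≤ 2 * m * L := by
    intro z hz
    have hzm : ∑ i, |z i| ≤ (m:ℤ) := (hB z).mp hz
    have hdist1 : ∑ i, |(x + z) i - x i| = ∑ i, |z i| :=
      Finset.sum_congr rfl fun i _ => by simp
    have hdist2 : ∑ i, |z i - (0 : Fin d → ℤ) i| = ∑ i, |z i| := by simp
    have hdist3 : ∑ i, |(0 : Fin d → ℤ) i - z i| = ∑ i, |z i| := by simp
    have hdist4 : ∑ i, |x i - (x + z) i| = ∑ i, |z i| :=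
      Finset.sum_congr rfl fun i _ => by simp
    have p1 : c ^ m * G z x ≤ G z (x + z) := hpath m z (x + z) x (by rw [hdist1]; exact hzm)
    have p2 : c ^ m * G x 0 ≤ G x z := hpath m x z 0 (by rw [hdist2]; exact hzm)
    have p3 : c ^ m * G x z ≤ G x 0 := hpath m x 0 z (by rw [hdist3]; exact hzm)
    have p4 : c ^ m * G z (x + z) ≤ G z x := hpath m z x (x + z) (by rw [hdist4]; exact hzm)
    have hcm : (0:ℝ) < c ^ m := pow_pos hc0 m
    have q1 : c ^ m * (c ^ m * G 0 x) ≤ G z (x + z) := by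
      have h5 : c ^ m * G 0 x ≤ G z x := by
        rw [hsymm 0 x, hsymm z x]; exact p2
      exact le_trans (mul_le_mul_of_nonneg_left h5 hcm.le) p1
    have q2 : c ^ m * (c ^ m * G z (x + z)) ≤ G 0 x := by
      have h5 : c ^ m * G z (x + z) ≤ G x z := by rw [hsymm x z]; exact p4
      rw [hsymm 0 x]
      exact le_trans (mul_le_mul_of_nonneg_left h5 hcm.le) p3
    have hlog1 : Real.log (c ^ m * (c ^ m * G 0 x)) ≤ Real.log (G z (x + z)) :=
      Real.log_le_log (mul_pos hcm (mul_pos hcm (hpos 0 x))) q1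
    have hlog2 : Real.log (c ^ m * (c ^ m * G z (x + z))) ≤ Real.log (G 0 x) :=
      Real.log_le_log (mul_pos hcm (mul_pos hcm (hpos z (x + z)))) q2
    have hexp : ∀ Y : ℝ, 0 < Y → Real.log (c ^ m * (c ^ m * Y))
        = -(2 * m * L) + Real.log Y := by
      intro Y hY
      rw [Real.log_mul hcm.ne' (mul_pos hcm hY).ne', Real.log_mul hcm.ne' (ne_of_gt hY),
        Real.log_pow, hlogc]
      push_cast
      ring
    rw [hexp _ (hpos 0 x)] at hlog1
    rw [hexp _ (hpos z (x + z))] at hlog2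
    rw [abs_le]
    constructor <;> linarith
  -- rewrite rho
  have hG0x := hpos 0 x
  have hρ : Real.log (Real.sqrt (G 0 0 * G x x) / G 0 x)
      = (Real.log (G 0 0) + Real.log (G x x)) / 2 - Real.log (G 0 x) := by
    rw [Real.log_div (Real.sqrt_pos.mpr (mul_pos (hpos 0 0) (hpos x x))).ne' (ne_of_gt hG0x),
      Real.log_sqrt (mul_pos (hpos 0 0) (hpos x x)).le,
      Real.log_mul (ne_of_gt (hpos 0 0)) (ne_of_gt (hpos x x))]
  have h0B : (0 : Fin d → ℤ) ∈ B := (hB 0).mpr (by simp)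
  have hNpos : 0 < B.card := Finset.card_pos.mpr ⟨0, h0B⟩
  have hNR : (0:ℝ) < (B.card : ℝ) := by exact_mod_cast hNpos
  have hterm : ∀ z ∈ B,
      |Real.log (Real.sqrt (G 0 0 * G x x) / G 0 x) + Real.log (G z (x + z))|
        ≤ (K + 2 * L) * m := by
    intro z hz
    have h1 := hdiag (0 : Fin d → ℤ)
    have h2 := hdiag x
    have h3 := hoff z hz
    rw [hρ]
    rw [abs_le] at h1 h2 h3 ⊢
    have hint : (0:ℝ) ≤ K * ((m:ℝ) - 1) := mul_nonneg hK0 (by linarith)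
    constructor <;> nlinarith [hL0.le, hK0]
  have hEq : Real.log (Real.sqrt (G 0 0 * G x x) / G 0 x)
      - (-(1 / (B.card : ℝ)) * ∑ z ∈ B, Real.log (G z (x + z)))
      = (1 / (B.card : ℝ)) * ∑ z ∈ B,
          (Real.log (Real.sqrt (G 0 0 * G x x) / G 0 x) + Real.log (G z (x + z))) := by
    rw [Finset.sum_add_distrib, Finset.sum_const, nsmul_eq_mul]
    have hNe : (B.card : ℝ) ≠ 0 := hNR.ne'
    field_simp
    ring
  rw [hEq, abs_mul, abs_of_pos (by positivity : (0:ℝ) < 1 / (B.card : ℝ))]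
  have habs : |∑ z ∈ B, (Real.log (Real.sqrt (G 0 0 * G x x) / G 0 x) + Real.log (G z (x + z)))|
      ≤ ∑ z ∈ B, |Real.log (Real.sqrt (G 0 0 * G x x) / G 0 x) + Real.log (G z (x + z))| :=
    Finset.abs_sum_le_sum_abs _ _
  have hle : ∑ z ∈ B, |Real.log (Real.sqrt (G 0 0 * G x x) / G 0 x) + Real.log (G z (x + z))|
      ≤ (B.card : ℝ) * ((K + 2 * L) * m) := by
    calc ∑ z ∈ B, |Real.log (Real.sqrt (G 0 0 * G x x) / G 0 x) + Real.log (G z (x + z))|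
        ≤ ∑ _z ∈ B, (K + 2 * L) * m := Finset.sum_le_sum hterm
      _ = (B.card : ℝ) * ((K + 2 * L) * m) := by rw [Finset.sum_const, nsmul_eq_mul]
  calc (1 / (B.card : ℝ)) * |∑ z ∈ B, (Real.log (Real.sqrt (G 0 0 * G x x) / G 0 x) + Real.log (G z (x + z)))|
      ≤ (1 / (B.card : ℝ)) * ((B.card : ℝ) * ((K + 2 * L) * m)) :=
        mul_le_mul_of_nonneg_left (habs.trans hle) (by positivity)
    _ = (K + 2 * L) * m := by
        rw [← mul_assoc, one_div, inv_mul_cancel₀ hNR.ne', one_mul]
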